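/- For n ≥ m ≥ 1, the universal channel U_{n,m} cannot be written as a convex combination of channels each of whose output support has size at most n−m; i.e., if U_{n,m} = Σ_i p_i N_i with p_i > 0, Σ p_i = 1, and each N_i a channel from m-subsets of [n] to [n], then some N_i assigns positive probability to more than n−m output symbols. -/

import Mathlib

open Finset

/-- The universal channel `U_{n,m}`: inputs are `m`-element subsets of `[n]`,
and the output is a uniformly random element of the input set. -/
noncomputable def universalChannel (n m : ℕ) :
    {s : Finset (Fin n) // s.card = m} → Fin n → ℝ :=
  fun x y => if y ∈ x.1 then 1 / (m : ℝ) else 0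

open scoped Classical in
theorem universalChannel_not_convexCombination_of_small_support
    (n m : ℕ) (hm : 1 ≤ m) (hmn : m ≤ n)
    (K : ℕ) (p : Fin K → ℝ) (N : Fin K → {s : Finset (Fin n) // s.card = m} → Fin n → ℝ)
    (hp : ∀ i, 0 < p i) (hpsum : ∑ i, p i = 1)
    (hNnonneg : ∀ i x y, 0 ≤ N i x y) (hNstoch : ∀ i x, ∑ y : Fin n, N i x y = 1)
    (hdecomp : ∀ x y, universalChannel n m x y = ∑ i, p i * N i x y) :
    ∃ i : Fin K, n - m < (Finset.univ.filter fun y : Fin n => ∃ x, 0 < N i x y).card := by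
  by_contra h
  push_neg at h
  have hK : 0 < K := by
    rcases Nat.eq_zero_or_pos K with hK | hK
    · subst hK; simp at hpsum
    · exact hK
  set i : Fin K := ⟨0, hK⟩
  set Z := Finset.univ.filter fun y : Fin n => ∃ x, 0 < N i x y with hZ
  have hZcard : Z.card ≤ n - m := h i
  have hcompl : m ≤ (Finset.univ \ Z).card := by
    rw [Finset.card_sdiff_of_subset (Finset.subset_univ Z), Finset.card_univ, Fintype.card_fin]
    omega
  obtain ⟨x, hxsub, hxcard⟩ := Finset.exists_subset_card_eq hcompl
  have hzero : ∀ y, N i ⟨x, hxcard⟩ y = 0 := by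
    intro y
    by_cases hy : y ∈ x
    · have hyZ : y ∉ Z := fun hmem => (Finset.mem_sdiff.mp (hxsub hy)).2 hmem
      rw [hZ, Finset.mem_filter] at hyZ
      push_neg at hyZ
      have h1 := hyZ (Finset.mem_univ y) ⟨x, hxcard⟩
      have h2 := hNnonneg i ⟨x, hxcard⟩ y
      linarith
    · have hU : universalChannel n m ⟨x, hxcard⟩ y = 0 := by
        simp [universalChannel, hy]
      rw [hdecomp] at hU
      have hterm : ∀ j ∈ Finset.univ, 0 ≤ p j * N j ⟨x, hxcard⟩ y :=
        fun j _ => mul_nonneg (hp j).le (hNnonneg j _ y)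
      have h3 := (Finset.sum_eq_zero_iff_of_nonneg hterm).mp hU i (Finset.mem_univ i)
      have h4 := hp i
      have h5 := hNnonneg i ⟨x, hxcard⟩ y
      nlinarith
  have hs := hNstoch i ⟨x, hxcard⟩
  rw [Finset.sum_eq_zero (fun y _ => hzero y)] at hs
  norm_num at hs
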